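/- Every path γ : [a,b] → ℍ \ {0} with a companion admits a continuation of the quaternionic logarithm along it: there exists a continuous γ̃ : [a,b] → ℍ with exp ∘ γ̃ = γ. -/

import Mathlib

open Quaternion Set

/-- The quaternionic exponential, given by the power series `∑ qᵏ/k!`. -/
noncomputable def qexp (q : ℍ[ℝ]) : ℍ[ℝ] := NormedSpace.exp q

/-- The slice argument `arg_ℐ(q) ∈ (0,π)` of a nonreal quaternion. -/
noncomputable def sliceArg (q : ℍ[ℝ]) : ℝ := Real.arccos (q.re / ‖q‖)

/-- The imaginary unit `ℐ(q)` of a nonreal quaternion. -/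
noncomputable def unitIm (q : ℍ[ℝ]) : ℍ[ℝ] := ‖q.im‖⁻¹ • q.im

/- `Arg(q) = ℐ(q)·arg_ℐ(q)` for nonreal `q`, and `0` on the reals. -/
open scoped Classical in
noncomputable def qArg (q : ℍ[ℝ]) : ℍ[ℝ] :=
  if q.im = 0 then 0 else sliceArg q • unitIm q

/-- The `2k`-th branch of the quaternionic argument:
`Arg_{2k}(q) = ℐ(q)·(arg_ℐ(q) + 2kπ)`. -/
noncomputable def qArg2k (k : ℤ) (q : ℍ[ℝ]) : ℍ[ℝ] :=
  (sliceArg q + 2 * (k : ℝ) * Real.pi) • unitIm q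

/-- The sphere `𝕊` of imaginary units of the quaternions. -/
abbrev SphQ : Type := {I : ℍ[ℝ] // I * I = -1}

/-- The identification of antipodal imaginary units. -/
instance sphSetoid : Setoid SphQ where
  r I J := (I : ℍ[ℝ]) = (J : ℍ[ℝ]) ∨ (I : ℍ[ℝ]) = -(J : ℍ[ℝ])
  iseqv := by
    refine ⟨fun I => Or.inl rfl, ?_, ?_⟩
    · rintro I J (h | h)
      · exact Or.inl h.symm
      · exact Or.inr (by rw [h, neg_neg])
    · rintro I J K (h | h) (h' | h')
      · exact Or.inl (h.trans h')
      · exact Or.inr (by rw [h, h'])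
      · exact Or.inr (by rw [h, h'])
      · exact Or.inl (by rw [h, h', neg_neg])

/-- The quotient `𝕊/{±1}` of the sphere of imaginary units by the antipodal map. -/
abbrev PS : Type := Quotient sphSetoid

/-- `q` belongs to the complex slice `ℂ_c = ℝ + ℝJ` determined by `c ∈ 𝕊/{±1}`. -/
def inSlice (q : ℍ[ℝ]) (c : PS) : Prop :=
  ∃ J : SphQ, Quotient.mk sphSetoid J = c ∧ ∃ x y : ℝ, q = (x : ℍ[ℝ]) + y • (J : ℍ[ℝ])

/-- `𝔍` is a companion of the path `γ` on `[a,b]`. -/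
def IsCompanion (γ : ℝ → ℍ[ℝ]) (a b : ℝ) (𝔍 : ℝ → PS) : Prop :=
  ContinuousOn 𝔍 (Set.Icc a b) ∧ ∀ t ∈ Set.Icc a b, inSlice (γ t) (𝔍 t)

open scoped RealInnerProductSpace

lemma exists_lift (a b : ℝ) (hab : a ≤ b) {E : Type*} [TopologicalSpace E]
    (P : ℝ → E → Prop)
    (hdeck : ∀ t ∈ Icc a b, ∀ e e' : E, P t e → P t e' →
      ∃ φ : E → E, Continuous φ ∧ φ e' = e ∧ ∀ t' ∈ Icc a b, ∀ x, P t' x → P t' (φ x))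
    (hloc : ∀ t₀ ∈ Icc a b, ∃ δ > (0:ℝ), ∃ s : ℝ → E,
      ContinuousOn s (Icc a b ∩ Icc (t₀ - δ) (t₀ + δ)) ∧
      ∀ t ∈ Icc a b ∩ Icc (t₀ - δ) (t₀ + δ), P t (s t)) :
    ∃ g : ℝ → E, ContinuousOn g (Icc a b) ∧ ∀ t ∈ Icc a b, P t (g t) := by
  classical
  set S : Set ℝ := {t | t ∈ Icc a b ∧ ∃ g : ℝ → E,
      ContinuousOn g (Icc a t) ∧ ∀ u ∈ Icc a t, P u (g u)} with hSdef
  have haS : a ∈ S := by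
    obtain ⟨δ, hδ, s, hs, hsP⟩ := hloc a ⟨le_refl a, hab⟩
    have hmem : a ∈ Icc a b ∩ Icc (a - δ) (a + δ) :=
      ⟨⟨le_refl a, hab⟩, by constructor <;> linarith⟩
    refine ⟨⟨le_refl a, hab⟩, s, hs.mono ?_, fun u hu => ?_⟩
    · intro x hx
      have : x = a := le_antisymm hx.2 hx.1
      rw [this]; exact hmem
    · have : u = a := le_antisymm hu.2 hu.1
      rw [this]; exact hsP a hmem
  have hbdd : BddAbove S := ⟨b, fun t ht => ht.1.2⟩
  have hSne : S.Nonempty := ⟨a, haS⟩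
  set c := sSup S with hc
  have hac : a ≤ c := le_csSup hbdd haS
  have hcb : c ≤ b := csSup_le hSne fun t ht => ht.1.2
  obtain ⟨δ, hδ, s, hs, hsP⟩ := hloc c ⟨hac, hcb⟩
  obtain ⟨t, htS, htgt⟩ := exists_lt_of_lt_csSup hSne (show c - δ < c by linarith)
  have htc : t ≤ c := le_csSup hbdd htS
  obtain ⟨htab, g, hg, hgP⟩ := htS
  have htD : t ∈ Icc a b ∩ Icc (c - δ) (c + δ) :=
    ⟨htab, by constructor <;> linarith⟩
  obtain ⟨φ, hφc, hφe, hφP⟩ := hdeck t htab (g t) (s t)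
    (hgP t ⟨htab.1, le_refl t⟩) (hsP t htD)
  set u := min b (c + δ) with hu
  have hcu : c ≤ u := le_min hcb (by linarith)
  have htu : t ≤ u := le_trans htc hcu
  have hub : u ≤ b := min_le_left _ _
  have hau : a ≤ u := le_trans hac hcu
  -- the glued function
  set h : ℝ → E := fun x => if x ≤ t then g x else φ (s x) with hhdef
  have hsubR : Icc a u ∩ Ici t ⊆ Icc a b ∩ Icc (c - δ) (c + δ) := by
    rintro x ⟨⟨hx1, hx2⟩, hx3⟩
    exact ⟨⟨hx1, le_trans hx2 hub⟩,
      ⟨by simp only [mem_Ici] at hx3; linarith, le_trans hx2 (min_le_right _ _)⟩⟩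
  have hcont : ContinuousOn h (Icc a u) := by
    apply ContinuousOn.if
    · intro x hx
      have hfr : x ∈ frontier (Iic t) := by
        have : {a : ℝ | a ≤ t} = Iic t := rfl
        rw [← this]; exact hx.2
      rw [frontier_Iic] at hfr
      simp only [mem_singleton_iff] at hfr
      subst hfr
      exact hφe.symm
    · apply hg.mono
      intro x hx
      have h1 : x ∈ Icc a u := hx.1
      have h2 : x ∈ closure {a | a ≤ t} := hx.2
      have : x ≤ t := by
        have : closure {a : ℝ | a ≤ t} = Iic t := (isClosed_Iic).closure_eq
        rw [this] at h2; exact h2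
      exact ⟨h1.1, this⟩
    · apply (hφc.comp_continuousOn (hs.mono hsubR)).mono
      intro x hx
      have h2 : x ∈ closure {a : ℝ | ¬ a ≤ t} := hx.2
      have : {a : ℝ | ¬ a ≤ t} = Ioi t := by ext z; simp [not_le]
      rw [this, closure_Ioi] at h2
      exact ⟨hx.1, h2⟩
  have hlift : ∀ x ∈ Icc a u, P x (h x) := by
    intro x hx
    by_cases hxt : x ≤ t
    · simp only [hhdef, if_pos hxt]
      exact hgP x ⟨hx.1, hxt⟩
    · simp only [hhdef, if_neg hxt]
      push_neg at hxt
      have hxD : x ∈ Icc a b ∩ Icc (c - δ) (c + δ) :=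
        hsubR ⟨hx, le_of_lt hxt⟩
      exact hφP x hxD.1 _ (hsP x hxD)
  have huS : u ∈ S := ⟨⟨hau, hub⟩, h, hcont, hlift⟩
  have huc : u ≤ c := le_csSup hbdd huS
  have hbc : b ≤ c := by
    by_contra hbc
    push_neg at hbc
    have : c < u := lt_min hbc (by linarith)
    linarith
  have hcb' : c = b := le_antisymm hcb hbc
  have hbS : b ∈ S := by
    have : u = b := by rw [hu, hcb']; exact min_eq_left (by linarith)
    rwa [this] at huS
  obtain ⟨_, g, hg, hgP⟩ := hbS
  exact ⟨g, hg, hgP⟩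


lemma imunit_re_norm {e : ℍ[ℝ]} (h : e * e = -1) : e.re = 0 ∧ ‖e‖ = 1 := by
  have hre : (e * e).re = -1 := by rw [h]; simp
  have h1 : (e * e).imI = 0 := by rw [h]; simp
  have h2 : (e * e).imJ = 0 := by rw [h]; simp
  have h3 : (e * e).imK = 0 := by rw [h]; simp
  rw [Quaternion.re_mul] at hre
  rw [Quaternion.imI_mul] at h1
  rw [Quaternion.imJ_mul] at h2
  rw [Quaternion.imK_mul] at h3
  have hre0 : e.re = 0 := by
    by_contra hr
    have hi : e.imI = 0 := by
      have : 2 * e.re * e.imI = 0 := by linarith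
      rcases mul_eq_zero.1 this with h' | h'
      · exact absurd (by rcases mul_eq_zero.1 h' with h'' | h'' <;> [norm_num at h''; exact h'']) hr
      · exact h'
    have hj : e.imJ = 0 := by
      have : 2 * e.re * e.imJ = 0 := by linarith
      rcases mul_eq_zero.1 this with h' | h'
      · exact absurd (by rcases mul_eq_zero.1 h' with h'' | h'' <;> [norm_num at h''; exact h'']) hr
      · exact h'
    have hk : e.imK = 0 := by
      have : 2 * e.re * e.imK = 0 := by linarith
      rcases mul_eq_zero.1 this with h' | h'
      · exact absurd (by rcases mul_eq_zero.1 h' with h'' | h'' <;> [norm_num at h''; exact h'']) hr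
      · exact h'
    nlinarith [sq_nonneg e.re]
  refine ⟨hre0, ?_⟩
  have hns : Quaternion.normSq e = 1 := by
    rw [Quaternion.normSq_def']
    nlinarith
  have hnn : ‖e‖ * ‖e‖ = 1 := by rw [← Quaternion.normSq_eq_norm_mul_self, hns]
  have h4 : (‖e‖ - 1) * (‖e‖ + 1) = 0 := by nlinarith
  rcases mul_eq_zero.1 h4 with h' | h'
  · linarith
  · have := norm_nonneg e; linarith

lemma sphere_lift (a b : ℝ) (hab : a ≤ b) (𝔍 : ℝ → PS) (h𝔍 : ContinuousOn 𝔍 (Icc a b)) :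
    ∃ J : ℝ → ℍ[ℝ], ContinuousOn J (Icc a b) ∧
      ∀ t ∈ Icc a b, ∃ h : J t * J t = -1, Quotient.mk sphSetoid ⟨J t, h⟩ = 𝔍 t := by
  set P : ℝ → ℍ[ℝ] → Prop := fun t e =>
    ∃ h : e * e = -1, Quotient.mk sphSetoid ⟨e, h⟩ = 𝔍 t with hP
  have key := exists_lift a b hab P ?_ ?_
  · obtain ⟨g, hg, hgP⟩ := key
    exact ⟨g, hg, hgP⟩
  · -- deck transformations
    rintro t ht e e' ⟨he, hme⟩ ⟨he', hme'⟩
    have hrel := Quotient.exact (hme.trans hme'.symm)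
    rcases hrel with h | h
    · exact ⟨id, continuous_id, by simpa using h.symm, fun t' _ x hx => hx⟩
    · refine ⟨fun x => -x, continuous_neg, by simp only at h; rw [h], ?_⟩
      rintro t' _ x ⟨hx, hmx⟩
      refine ⟨by rw [neg_mul_neg, hx], ?_⟩
      have : Quotient.mk sphSetoid (⟨-x, by rw [neg_mul_neg, hx]⟩ : SphQ)
          = Quotient.mk sphSetoid (⟨x, hx⟩ : SphQ) :=
        Quotient.sound (Or.inr rfl)
      rw [this, hmx]
  · -- local lifts
    rintro t₀ ht₀
    obtain ⟨K₀, hK₀⟩ := Quotient.exists_rep (𝔍 t₀)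
    set e : ℍ[ℝ] := (K₀ : ℍ[ℝ]) with he
    have hee : e * e = -1 := K₀.2
    have hnorme : ‖e‖ = 1 := (imunit_re_norm hee).2
    -- the continuous "double cover detector"
    have hresp : ∀ K K' : SphQ, K ≈ K' →
        (⟪(K : ℍ[ℝ]), e⟫ • (K : ℍ[ℝ])) = (⟪(K' : ℍ[ℝ]), e⟫ • (K' : ℍ[ℝ])) := by
      rintro K K' (h | h) <;> rw [h]
      rw [inner_neg_left, neg_smul, smul_neg, neg_neg]
    set Φ : PS → ℍ[ℝ] := Quotient.lift (fun K : SphQ => ⟪(K : ℍ[ℝ]), e⟫ • (K : ℍ[ℝ])) hresp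
      with hΦ
    have hΦc : Continuous Φ := by
      apply Continuous.quotient_lift
      exact ((continuous_subtype_val.inner (𝕜 := ℝ) continuous_const)).smul continuous_subtype_val
    set w : ℝ → ℍ[ℝ] := fun t => Φ (𝔍 t) with hw
    have hwc : ContinuousOn w (Icc a b) := hΦc.comp_continuousOn h𝔍
    have hwrep : ∀ t (K : SphQ), Quotient.mk sphSetoid K = 𝔍 t →
        w t = ⟪(K : ℍ[ℝ]), e⟫ • (K : ℍ[ℝ]) := by
      intro t K hK
      rw [hw]; simp only [← hK, hΦ, Quotient.lift_mk]
    have hwt₀ : w t₀ = e := by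
      rw [hwrep t₀ K₀ hK₀, real_inner_self_eq_norm_mul_norm, ← he, hnorme]
      simp
    -- find δ
    have hcw : ContinuousWithinAt w (Icc a b) t₀ := hwc t₀ ht₀
    have hball : w ⁻¹' Metric.ball e (1/2) ∈ nhdsWithin t₀ (Icc a b) := by
      apply hcw
      rw [hwt₀]
      exact Metric.ball_mem_nhds e (by norm_num)
    rw [Metric.mem_nhdsWithin_iff] at hball
    obtain ⟨ε, hε, hsub⟩ := hball
    have hDsub : Icc a b ∩ Icc (t₀ - ε/2) (t₀ + ε/2) ⊆ Metric.ball t₀ ε ∩ Icc a b := by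
      rintro x ⟨hx1, hx2, hx3⟩
      refine ⟨?_, hx1⟩
      rw [Metric.mem_ball, Real.dist_eq]
      rw [abs_lt]
      constructor <;> linarith
    have hlow : ∀ x ∈ Icc a b ∩ Icc (t₀ - ε/2) (t₀ + ε/2), 1/2 ≤ ‖w x‖ := by
      intro x hx
      have := hsub (hDsub hx)
      simp only [mem_preimage, Metric.mem_ball, dist_eq_norm] at this
      have habs := abs_norm_sub_norm_le (w x) e
      rw [abs_le] at habs
      rw [hnorme] at habs
      linarith [habs.1]
    have hwne : ∀ x ∈ Icc a b ∩ Icc (t₀ - ε/2) (t₀ + ε/2), w x ≠ 0 := by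
      intro x hx h0
      have := hlow x hx
      rw [h0, norm_zero] at this
      linarith
    refine ⟨ε / 2, by linarith, fun u => ‖w u‖⁻¹ • w u, ?_, ?_⟩
    · have hwD : ContinuousOn w (Icc a b ∩ Icc (t₀ - ε/2) (t₀ + ε/2)) :=
        hwc.mono inter_subset_left
      exact (hwD.norm.inv₀ (fun x hx => by
        have := hlow x hx; positivity)).smul hwD
    · intro u hu
      obtain ⟨K, hK⟩ := Quotient.exists_rep (𝔍 u)
      have hwu : w u = ⟪(K : ℍ[ℝ]), e⟫ • (K : ℍ[ℝ]) := hwrep u K hK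
      have hKK : (K : ℍ[ℝ]) * (K : ℍ[ℝ]) = -1 := K.2
      have hnK : ‖(K : ℍ[ℝ])‖ = 1 := (imunit_re_norm hKK).2
      set cc : ℝ := ⟪(K : ℍ[ℝ]), e⟫ with hcc
      have hnormwu : ‖w u‖ = |cc| := by
        rw [hwu, norm_smul, hnK, Real.norm_eq_abs, mul_one]
      have hccne : cc ≠ 0 := by
        intro h0
        have := hlow u hu
        rw [hnormwu, h0, abs_zero] at this
        linarith
      have hform : ‖w u‖⁻¹ • w u = (|cc|⁻¹ * cc) • (K : ℍ[ℝ]) := by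
        rw [hnormwu, hwu, smul_smul]
      show P u (‖w u‖⁻¹ • w u)
      rcases le_or_gt 0 cc with hpos | hneg
      · have : |cc|⁻¹ * cc = 1 := by
          rw [abs_of_nonneg hpos]
          field_simp
        rw [hform, this, one_smul]
        refine ⟨hKK, ?_⟩
        have : (⟨(K : ℍ[ℝ]), hKK⟩ : SphQ) = K := Subtype.coe_eta K hKK
        rw [this, hK]
      · have : |cc|⁻¹ * cc = -1 := by
          rw [abs_of_neg hneg]
          field_simp
        rw [hform, this, neg_one_smul]
        have hKK' : (-(K : ℍ[ℝ])) * (-(K : ℍ[ℝ])) = -1 := by rw [neg_mul_neg, hKK]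
        refine ⟨hKK', ?_⟩
        have : Quotient.mk sphSetoid (⟨-(K : ℍ[ℝ]), hKK'⟩ : SphQ)
            = Quotient.mk sphSetoid K := by
          apply Quotient.sound
          right
          simp
        rw [this, hK]

lemma complex_lift (a b : ℝ) (hab : a ≤ b) (f : ℝ → ℂ) (hf : ContinuousOn f (Icc a b))
    (hfne : ∀ t ∈ Icc a b, f t ≠ 0) :
    ∃ L : ℝ → ℂ, ContinuousOn L (Icc a b) ∧ ∀ t ∈ Icc a b, Complex.exp (L t) = f t := by
  set P : ℝ → ℂ → Prop := fun t z => Complex.exp z = f t with hP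
  have key := exists_lift a b hab P ?_ ?_
  · obtain ⟨g, hg, hgP⟩ := key
    exact ⟨g, hg, hgP⟩
  · -- deck transformations
    rintro t ht e e' he he'
    refine ⟨fun x => x + (e - e'), continuous_add_right _, by ring_nf, ?_⟩
    intro t' ht' x hx
    show Complex.exp (x + (e - e')) = f t'
    rw [Complex.exp_add, Complex.exp_sub, he, he']
    rw [div_self (hfne t ht), mul_one]
    exact hx
  · -- local lifts
    intro t₀ ht₀
    have hft₀ : f t₀ ≠ 0 := hfne t₀ ht₀
    obtain ⟨e₀, he₀⟩ : ∃ z, Complex.exp z = f t₀ := by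
      have : f t₀ ∈ Set.range Complex.exp := by
        rw [Complex.range_exp]
        simpa using hft₀
      exact this
    set F : ℝ → ℂ := fun u => f u / f t₀ with hF
    have hFc : ContinuousOn F (Icc a b) := hf.div_const _
    have hFt₀ : F t₀ = 1 := div_self hft₀
    have hball : F ⁻¹' Metric.ball 1 1 ∈ nhdsWithin t₀ (Icc a b) := by
      apply hFc t₀ ht₀
      rw [hFt₀]
      exact Metric.ball_mem_nhds 1 one_pos
    rw [Metric.mem_nhdsWithin_iff] at hball
    obtain ⟨ε, hε, hsub⟩ := hball
    have hDsub : Icc a b ∩ Icc (t₀ - ε/2) (t₀ + ε/2) ⊆ Metric.ball t₀ ε ∩ Icc a b := by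
      rintro x ⟨hx1, hx2, hx3⟩
      refine ⟨?_, hx1⟩
      rw [Metric.mem_ball, Real.dist_eq, abs_lt]
      constructor <;> linarith
    have hFre : ∀ x ∈ Icc a b ∩ Icc (t₀ - ε/2) (t₀ + ε/2), 0 < (F x).re := by
      intro x hx
      have := hsub (hDsub hx)
      simp only [mem_preimage, Metric.mem_ball, dist_eq_norm] at this
      have habs : |(F x - 1).re| ≤ ‖F x - 1‖ := Complex.abs_re_le_norm _
      rw [Complex.sub_re, Complex.one_re] at habs
      rw [abs_le] at habs
      linarith [habs.1]
    have hFslit : ∀ x ∈ Icc a b ∩ Icc (t₀ - ε/2) (t₀ + ε/2), F x ∈ Complex.slitPlane := by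
      intro x hx
      rw [Complex.mem_slitPlane_iff]
      exact Or.inl (hFre x hx)
    refine ⟨ε / 2, by linarith, fun u => e₀ + Complex.log (F u), ?_, ?_⟩
    · apply ContinuousOn.add continuousOn_const
      intro x hx
      exact (continuousAt_clog (hFslit x hx)).comp_continuousWithinAt
        ((hFc.mono inter_subset_left) x hx)
    · intro u hu
      show Complex.exp (e₀ + Complex.log (F u)) = f u
      have hFu : F u ≠ 0 := div_ne_zero (hfne u hu.1) hft₀
      rw [Complex.exp_add, Complex.exp_log hFu, he₀, hF]
      rw [mul_comm, div_mul_cancel₀ _ hft₀]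

lemma qexp_slice (u v : ℝ) {Jq : ℍ[ℝ]} (hre : Jq.re = 0) (hnorm : ‖Jq‖ = 1) :
    NormedSpace.exp ((u : ℍ[ℝ]) + v • Jq)
      = ((Real.exp u * Real.cos v : ℝ) : ℍ[ℝ]) + (Real.exp u * Real.sin v) • Jq := by
  have him : Jq.im = Jq := by
    have h := Jq.re_add_im
    rw [hre] at h
    simpa using h
  set q : ℍ[ℝ] := (u : ℍ[ℝ]) + v • Jq with hq
  have hqre : q.re = u := by simp [hq, Quaternion.re_smul, hre]
  have hqim : q.im = v • Jq := by
    rw [hq, Quaternion.im_add, Quaternion.im_coe, Quaternion.im_smul, him, zero_add]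
  have hnim : ‖q.im‖ = |v| := by rw [hqim, norm_smul, Real.norm_eq_abs, hnorm, mul_one]
  rw [Quaternion.exp_eq, hqre, hnim, hqim]
  have hexp : NormedSpace.exp u = Real.exp u := by rw [Real.exp_eq_exp_ℝ]
  rw [hexp]
  have hsin : (Real.sin |v| / |v|) • (v • Jq) = Real.sin v • Jq := by
    rw [smul_smul]
    congr 1
    rcases lt_trichotomy v 0 with hv | hv | hv
    · rw [abs_of_neg hv, Real.sin_neg, neg_div_neg_eq, div_mul_cancel₀ _ hv.ne]
    · simp [hv]
    · rw [abs_of_pos hv, div_mul_cancel₀ _ hv.ne']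
  rw [Real.cos_abs, hsin, smul_add]
  congr 1
  · rw [← Quaternion.coe_mul_eq_smul, ← Quaternion.coe_mul]
  · rw [smul_smul]

theorem continuation_of_log_exists_of_companion' (a b : ℝ) (hab : a ≤ b)
    (γ : ℝ → ℍ[ℝ]) (hγ : ContinuousOn γ (Icc a b)) (hne : ∀ t ∈ Icc a b, γ t ≠ 0)
    (hcomp : ∃ 𝔍 : ℝ → PS, ContinuousOn 𝔍 (Set.Icc a b) ∧ ∀ t ∈ Set.Icc a b,
      ∃ K : SphQ, Quotient.mk sphSetoid K = 𝔍 t ∧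
        ∃ x y : ℝ, γ t = (x : ℍ[ℝ]) + y • (K : ℍ[ℝ])) :
    ∃ g : ℝ → ℍ[ℝ], ContinuousOn g (Icc a b) ∧
      ∀ t ∈ Icc a b, NormedSpace.exp (g t) = γ t := by
  obtain ⟨𝔍, h𝔍c, h𝔍s⟩ := hcomp
  obtain ⟨J, hJc, hJP⟩ := sphere_lift a b hab 𝔍 h𝔍c
  have hdecomp : ∀ t ∈ Icc a b, γ t = ((γ t).re : ℍ[ℝ]) + ⟪γ t, J t⟫ • J t := by
    intro t ht
    obtain ⟨hsq, hmk⟩ := hJP t ht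
    obtain ⟨K, hKmk, xx, yy, hxy⟩ := h𝔍s t ht
    have hrel := Quotient.exact (hKmk.trans hmk.symm)
    have hre0 := (imunit_re_norm hsq).1
    have hnorm1 := (imunit_re_norm hsq).2
    have hex : ∃ x' y' : ℝ, γ t = (x' : ℍ[ℝ]) + y' • J t := by
      rcases hrel with h | h
      · exact ⟨xx, yy, by rw [hxy, h]⟩
      · refine ⟨xx, -yy, ?_⟩
        rw [hxy, h, smul_neg, neg_smul]
    obtain ⟨x', y', hγt⟩ := hex
    have hre : (γ t).re = x' := by
      rw [hγt]
      simp [Quaternion.re_smul, hre0]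
    have hinner : ⟪γ t, J t⟫ = y' := by
      rw [hγt, inner_add_left, real_inner_smul_left]
      have h1 : ⟪(x' : ℍ[ℝ]), J t⟫ = 0 := by
        rw [Quaternion.inner_def, Quaternion.coe_mul_eq_smul]
        simp [Quaternion.re_smul, hre0]
      have h2 : ⟪J t, J t⟫ = 1 := by
        rw [real_inner_self_eq_norm_mul_norm, hnorm1]; ring
      rw [h1, h2]; ring
    rw [hre, hinner]; exact hγt
  set x : ℝ → ℝ := fun t => (γ t).re with hx
  set y : ℝ → ℝ := fun t => ⟪γ t, J t⟫ with hy
  have hxc : ContinuousOn x (Icc a b) := Quaternion.continuous_re.comp_continuousOn hγ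
  have hyc : ContinuousOn y (Icc a b) := hγ.inner hJc
  set f : ℝ → ℂ := fun t => (x t : ℂ) + (y t : ℂ) * Complex.I with hf
  have hfc : ContinuousOn f (Icc a b) :=
    (Complex.continuous_ofReal.comp_continuousOn hxc).add
      ((Complex.continuous_ofReal.comp_continuousOn hyc).mul continuousOn_const)
  have hfre : ∀ t, (f t).re = x t := by intro t; simp [hf]
  have hfim : ∀ t, (f t).im = y t := by intro t; simp [hf]
  have hfne : ∀ t ∈ Icc a b, f t ≠ 0 := by
    intro t ht h0
    have hx0 : x t = 0 := by rw [← hfre t, h0]; simp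
    have hy0 : y t = 0 := by rw [← hfim t, h0]; simp
    apply hne t ht
    have := hdecomp t ht
    rw [show ((γ t).re : ℝ) = x t from rfl, hx0] at this
    rw [show (⟪γ t, J t⟫ : ℝ) = y t from rfl, hy0] at this
    simpa using this
  obtain ⟨L, hLc, hLP⟩ := complex_lift a b hab f hfc hfne
  refine ⟨fun t => (((L t).re : ℍ[ℝ]) + (L t).im • J t), ?_, ?_⟩
  · exact (Quaternion.continuous_coe.comp_continuousOn
      (Complex.continuous_re.comp_continuousOn hLc)).add
      ((Complex.continuous_im.comp_continuousOn hLc).smul hJc)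
  · intro t ht
    obtain ⟨hsq, -⟩ := hJP t ht
    have hre0 := (imunit_re_norm hsq).1
    have hnorm1 := (imunit_re_norm hsq).2
    rw [qexp_slice _ _ hre0 hnorm1]
    have hexp := hLP t ht
    have h1 : Real.exp (L t).re * Real.cos (L t).im = x t := by
      rw [← Complex.exp_re, hexp, hfre]
    have h2 : Real.exp (L t).re * Real.sin (L t).im = y t := by
      rw [← Complex.exp_im, hexp, hfim]
    rw [h1, h2]
    exact (hdecomp t ht).symm

theorem continuation_of_log_exists_of_companion (a b : ℝ) (hab : a ≤ b)
    (γ : ℝ → ℍ[ℝ]) (hγ : ContinuousOn γ (Icc a b)) (hne : ∀ t ∈ Icc a b, γ t ≠ 0)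
    (hcomp : ∃ 𝔍 : ℝ → PS, IsCompanion γ a b 𝔍) :
    ∃ g : ℝ → ℍ[ℝ], ContinuousOn g (Icc a b) ∧ ∀ t ∈ Icc a b, qexp (g t) = γ t := by
  obtain ⟨𝔍, h1, h2⟩ := hcomp
  obtain ⟨g, hg, hgP⟩ := continuation_of_log_exists_of_companion' a b hab γ hγ hne
    ⟨𝔍, h1, fun t ht => h2 t ht⟩
  exact ⟨g, hg, fun t ht => hgP t ht⟩
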